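/- Let E be the set of CCR-efficient DMUs. If for DMU_k ∈ E and some input index l the super-efficiency-type linear program min θ subject to Σ_{j∈E∖{k}} λ_j x_{lj} ≤ θ x_{lk}, Σ_{j∈E∖{k}} λ_j x_{ij} ≤ x_{ik} (i ≠ l), Σ_{j∈E∖{k}} λ_j y_{rj} ≥ y_{rk} (all r), λ ≥ 0 has optimal value θ* > 1 or is infeasible, then DMU_k is extreme: the system Σ_{j∈E∖{k}} λ_j X_j = X_k, Σ_{j∈E∖{k}} λ_j Y_j = Y_k, λ ≥ 0 has no solution; equivalently DMU_k cannot be written as a nonnegative combination of the other efficient DMUs. -/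
import Mathlib

/-- Feasibility of the super-efficiency model (5) for DMU `k`, input index `li`,
radial value `θ` and intensity vector `l` (supported on `E \ {k}`). -/
def Feas5 {n m s : ℕ} (X : Fin n → Fin m → ℝ) (Y : Fin n → Fin s → ℝ)
    (E : Finset (Fin n)) (k : Fin n) (li : Fin m) (θ : ℝ) (l : Fin n → ℝ) : Prop :=
  (∀ j, 0 ≤ l j) ∧
  (∑ j ∈ E.erase k, l j * X j li ≤ θ * X k li) ∧
  (∀ i, i ≠ li → ∑ j ∈ E.erase k, l j * X j i ≤ X k i) ∧
  (∀ r, Y k r ≤ ∑ j ∈ E.erase k, l j * Y j r)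

/-- Property 1 (one direction): if for some input `l` the super-efficiency LP (5) is
infeasible or has optimal value `θ* > 1` (every feasible value exceeds 1), then `DMU_k`
is extreme: it is not a nonnegative combination of the other efficient DMUs. -/
theorem superefficiency_gt_one_implies_extreme
    {n m s : ℕ} (X : Fin n → Fin m → ℝ) (Y : Fin n → Fin s → ℝ)
    (hX : ∀ j i, 0 < X j i) (hY : ∀ j r, 0 < Y j r)
    (E : Finset (Fin n)) (k : Fin n) (hk : k ∈ E)
    (h : ∃ li : Fin m, ∀ (θ : ℝ) (l : Fin n → ℝ), Feas5 X Y E k li θ l → 1 < θ) :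
    ¬ ∃ l : Fin n → ℝ, (∀ j, 0 ≤ l j) ∧
      (∀ i, ∑ j ∈ E.erase k, l j * X j i = X k i) ∧
      (∀ r, ∑ j ∈ E.erase k, l j * Y j r = Y k r) := by
  rintro ⟨l, hl0, hXeq, hYeq⟩
  obtain ⟨li, hli⟩ := h
  have : (1 : ℝ) < 1 := hli 1 l ⟨hl0, by rw [hXeq li, one_mul],
    fun i _ => le_of_eq (hXeq i), fun r => le_of_eq (hYeq r).symm⟩
  exact lt_irrefl 1 this
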